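/- In the maximisation variant of the dynamic program, defining M*(v,1) = w_1(v)·m(v) for v ∈ B_l (0 otherwise) and M*(v,n) = w_n(v)·m(v)·max_{(u,v)∈S} M*(u,n-1), the quantity max_{v ∈ B_r} M*(v, N) equals the maximum over all internal trees T with N leaves of ∏_{n=1}^N w_n(L_n(T))·m(L_n(T)). -/

import Mathlib

/-- Full binary trees: every vertex has 0 or 2 children. -/
inductive FBT where
  | leaf : FBT
  | node : FBT → FBT → FBT
deriving DecidableEq

namespace FBT

/-- Depth of a full binary tree. -/
def depth : FBT → ℕ
  | leaf => 0
  | node a b => max a.depth b.depth + 1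

/-- Positions (reversed root-paths: head is the edge nearest the vertex) of the
leaves of `T`, in left-to-right order. -/
def leaves : FBT → List (List Bool)
  | leaf => [[]]
  | node a b => a.leaves.map (· ++ [false]) ++ b.leaves.map (· ++ [true])

/-- Total number of vertices. -/
def numNodes : FBT → ℕ
  | leaf => 1
  | node a b => a.numNodes + b.numNodes + 1

/-- Number of internal (non-leaf) vertices. -/
def internals : FBT → ℕ
  | leaf => 0
  | node a b => a.internals + b.internals + 1

/-- The recursive probability function π of the stick-breaking prior:
`pi l T pos` where `pos` is the (reversed) position of the root of `T`. -/
def pi (l : List Bool → ℝ) : FBT → List Bool → ℝ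
  | leaf, pos => l pos
  | node a b, pos => (1 - l pos) * pi l a (false :: pos) * pi l b (true :: pos)

/-- Probability of an internal tree: `p(T) = π(root)`. -/
def pTree (l : List Bool → ℝ) (T : FBT) : ℝ := pi l T []

/-- The memoized value m̃, with `m̃(parent(root)) = 1`. -/
noncomputable def mt (l : List Bool → ℝ) : List Bool → ℝ
  | [] => 1 - l []
  | (b :: p) => Real.sqrt (mt l p) * (1 - l (b :: p))

/-- The memoized value m at a vertex: `m(v) = m̃(parent v)^(1/2) · l v`. -/
noncomputable def mleaf (l : List Bool → ℝ) : List Bool → ℝ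
  | [] => l []
  | (b :: p) => Real.sqrt (mt l p) * l (b :: p)

/-- `m̃(parent v)`, with the convention `m̃(parent root) = 1`. -/
noncomputable def mparent (l : List Bool → ℝ) : List Bool → ℝ
  | [] => 1
  | (_ :: p) => mt l p

/-- The set of internal trees of the complete binary tree of depth `D`,
i.e. full binary trees of depth at most `D`. -/
def trees : ℕ → Finset FBT
  | 0 => {leaf}
  | (D+1) => insert leaf ((trees D ×ˢ trees D).image (fun p => node p.1 p.2))

/-- Consecutive-leaf pairs of a single tree. -/
def transitions (T : FBT) : Finset (List Bool × List Bool) :=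
  (T.leaves.zip T.leaves.tail).toFinset

/-- The set `S(T_C)` of successive leaf transitions of the complete binary
tree of depth `D`. -/
def S (D : ℕ) : Finset (List Bool × List Bool) := (trees D).biUnion transitions

/-- The left boundary of the complete binary tree of depth `D`. -/
def Bl (D : ℕ) : Finset (List Bool) :=
  (Finset.range (D+1)).image (fun k => List.replicate k false)

/-- The right boundary of the complete binary tree of depth `D`. -/
def Br (D : ℕ) : Finset (List Bool) :=
  (Finset.range (D+1)).image (fun k => List.replicate k true)

/-- The marginalisation dynamic-programming table (indexed from `n = 1`). -/
def M (S : Finset (List Bool × List Bool)) (Bl : Finset (List Bool))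
    (w : ℕ → List Bool → ℝ) (mw : List Bool → ℝ) : ℕ → List Bool → ℝ
  | 0, _ => 0
  | 1, v => if v ∈ Bl then w 1 v * mw v else 0
  | (n+2), v => w (n+2) v * mw v *
      ∑ p ∈ S.filter (fun p => p.2 = v), M S Bl w mw (n+1) p.1

/-- The Viterbi-style max-product dynamic-programming table. -/
def Mstar (S : Finset (List Bool × List Bool)) (Bl : Finset (List Bool))
    (w : ℕ → List Bool → NNReal) (mw : List Bool → NNReal) : ℕ → List Bool → NNReal
  | 0, _ => 0
  | 1, v => if v ∈ Bl then w 1 v * mw v else 0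
  | (n+2), v => w (n+2) v * mw v *
      (S.filter (fun p => p.2 = v)).sup (fun p => Mstar S Bl w mw (n+1) p.1)

/-- The complete binary tree of depth `D`, as a full binary tree. -/
def completeTree : ℕ → FBT
  | 0 => leaf
  | (D+1) => node (completeTree D) (completeTree D)

end FBT
namespace FBT

/-! ### Basic tree lemmas -/

lemma mem_trees {D : ℕ} {T : FBT} : T ∈ trees D ↔ T.depth ≤ D := by
  induction D generalizing T with
  | zero => cases T <;> simp [trees, depth]
  | succ D ih =>
    cases T with
    | leaf => simp [trees, depth]
    | node a b =>
      have h : node a b ∈ trees (D+1) ↔ a ∈ trees D ∧ b ∈ trees D := by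
        simp [trees, eq_comm (a := node a b)]
      rw [h, ih, ih]
      show _ ↔ max a.depth b.depth + 1 ≤ D + 1
      omega

lemma leaves_ne_nil (T : FBT) : T.leaves ≠ [] := by
  induction T <;> simp_all [leaves]

lemma getLast?_replicate_succ {α} (k : ℕ) (c : α) :
    (List.replicate (k+1) c).getLast? = some c := by
  rw [List.replicate_succ', List.getLast?_concat]

lemma head?_leaves (T : FBT) :
    ∃ k, k ≤ T.depth ∧ T.leaves.head? = some (List.replicate k false) := by
  induction T with
  | leaf => exact ⟨0, le_refl _, rfl⟩
  | node a b iha ihb =>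
    obtain ⟨k, hk, h⟩ := iha
    refine ⟨k+1, by simp [depth]; omega, ?_⟩
    rw [leaves, List.head?_append, List.head?_map, h]
    simp [List.replicate_succ']

lemma getLast?_leaves (T : FBT) :
    ∃ k, k ≤ T.depth ∧ T.leaves.getLast? = some (List.replicate k true) := by
  induction T with
  | leaf => exact ⟨0, le_refl _, rfl⟩
  | node a b iha ihb =>
    obtain ⟨k, hk, h⟩ := ihb
    refine ⟨k+1, by simp [depth]; omega, ?_⟩
    rw [leaves, List.getLast?_append, List.getLast?_map, h]
    simp [List.replicate_succ']

/-! ### Zip-with-tail (consecutive pairs) lemmas -/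

lemma zipTail_append {α} (l₁ l₂ : List α) (h₁ : l₁ ≠ []) (h₂ : l₂ ≠ []) :
    (l₁ ++ l₂).zip (l₁ ++ l₂).tail =
      l₁.zip l₁.tail ++ (l₁.getLast h₁, l₂.head h₂) :: l₂.zip l₂.tail := by
  induction l₁ with
  | nil => simp at h₁
  | cons a l ih =>
    cases l with
    | nil =>
      cases l₂ with
      | nil => simp at h₂
      | cons b m => simp [List.zip]
    | cons c m' =>
      have hih := ih (by simp)
      simp only [List.cons_append, List.tail_cons, List.zip_cons_cons] at *
      rw [hih]
      simp [List.getLast_cons (l := c :: m') (by simp)]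

lemma zipTail_map {α β} (f : α → β) (l : List α) :
    (l.map f).zip (l.map f).tail = (l.zip l.tail).map (fun p => (f p.1, f p.2)) := by
  rw [← List.map_tail, List.zip_map]
  rfl

lemma chain'_zip_tail {α} (l : List α) :
    l.Chain' (fun x y => (x, y) ∈ l.zip l.tail) := by
  unfold List.Chain'
  rw [List.isChain_iff_getElem]
  intro i h
  have h1 : i < (l.zip l.tail).length := by
    simp [List.length_zip, List.length_tail]; omega
  have : (l.zip l.tail).get ⟨i, h1⟩ = (l.get ⟨i, by omega⟩, l.get ⟨i+1, by omega⟩) := by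
    simp [List.get_eq_getElem, List.getElem_zip, List.getElem_tail]
  have hm := List.getElem_mem h1
  simp only [List.getElem_zip, List.getElem_tail] at hm
  exact hm

/-! ### Shape of transitions -/

lemma transitions_shape {T : FBT} {u v : List Bool} (h : (u, v) ∈ transitions T) :
    ∃ a b p, u = List.replicate a true ++ false :: p ∧
      v = List.replicate b false ++ true :: p ∧
      a + 1 + p.length ≤ T.depth ∧ b + 1 + p.length ≤ T.depth := by
  induction T generalizing u v with
  | leaf => simp [transitions, leaves, List.zip] at h
  | node x y ihx ihy =>
    rw [transitions, List.mem_toFinset, leaves] at h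
    have hx : x.leaves.map (· ++ [false]) ≠ [] := by simp [leaves_ne_nil]
    have hy : y.leaves.map (· ++ [true]) ≠ [] := by simp [leaves_ne_nil]
    rw [zipTail_append _ _ hx hy] at h
    rw [List.mem_append, List.mem_cons] at h
    rcases h with h | h | h
    · rw [zipTail_map, List.mem_map] at h
      obtain ⟨⟨u', v'⟩, hm, he⟩ := h
      obtain ⟨a, b, p, hu, hv, ha, hb⟩ := ihx (by rwa [transitions, List.mem_toFinset])
      have heu : u' ++ [false] = u := congrArg Prod.fst he
      have hev : v' ++ [false] = v := congrArg Prod.snd he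
      refine ⟨a, b, p ++ [false], ?_, ?_, ?_, ?_⟩
      · rw [← heu, hu]; simp
      · rw [← hev, hv]; simp
      · simp [depth]; omega
      · simp [depth]; omega
    · -- crossing pair
      obtain ⟨k, hk, hkl⟩ := getLast?_leaves x
      obtain ⟨j, hj, hjh⟩ := head?_leaves y
      have h1 : (x.leaves.map (· ++ [false])).getLast hx
          = List.replicate k true ++ [false] := by
        have := List.getLast?_eq_getLast (l := x.leaves.map (· ++ [false])) hx
        rw [List.getLast?_map, hkl] at this
        simpa using this.symm
      have h2 : (y.leaves.map (· ++ [true])).head hy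
          = List.replicate j false ++ [true] := by
        have := List.head?_eq_head (l := y.leaves.map (· ++ [true])) hy
        rw [List.head?_map, hjh] at this
        simpa using this.symm
      have hu : u = List.replicate k true ++ false :: [] := by
        exact (congrArg Prod.fst h).trans h1
      have hv : v = List.replicate j false ++ true :: [] := by
        exact (congrArg Prod.snd h).trans h2
      exact ⟨k, j, [], hu, hv, by simp [depth]; omega, by simp [depth]; omega⟩
    · rw [zipTail_map, List.mem_map] at h
      obtain ⟨⟨u', v'⟩, hm, he⟩ := h
      obtain ⟨a, b, p, hu, hv, ha, hb⟩ := ihy (by rwa [transitions, List.mem_toFinset])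
      have heu : u' ++ [true] = u := congrArg Prod.fst he
      have hev : v' ++ [true] = v := congrArg Prod.snd he
      refine ⟨a, b, p ++ [true], ?_, ?_, ?_, ?_⟩
      · rw [← heu, hu]; simp
      · rw [← hev, hv]; simp
      · simp [depth]; omega
      · simp [depth]; omega

lemma chain'_transitions (T : FBT) :
    T.leaves.Chain' (fun a b => (a, b) ∈ transitions T) := by
  have := chain'_zip_tail T.leaves
  exact this.imp (fun a b h => by rwa [transitions, List.mem_toFinset])

end FBT

namespace FBT

/-- The shape of a transition in a complete tree of depth `D`. -/
def Tr (D : ℕ) (u v : List Bool) : Prop :=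
  ∃ a b p, u = List.replicate a true ++ false :: p ∧
    v = List.replicate b false ++ true :: p ∧
    a + 1 + p.length ≤ D ∧ b + 1 + p.length ≤ D

lemma chain'_pred {α} {R : α → α → Prop} {Q : α → Prop}
    (hQ : ∀ a b, R a b → Q a → Q b) :
    ∀ {l : List α}, l.Chain' R → (∀ h ∈ l.head?, Q h) → ∀ x ∈ l, Q x := by
  intro l
  induction l with
  | nil => simp
  | cons a t ih =>
    intro hc hh x hx
    unfold List.Chain' at hc
    rw [List.isChain_cons] at hc
    have hQa : Q a := hh a rfl
    rcases List.mem_cons.mp hx with rfl | hx'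
    · exact hQa
    · exact ih hc.2 (fun h hh' => hQ a h (hc.1 h hh') hQa) x hx'

lemma chain'_imp_mem {α} {R S : α → α → Prop} :
    ∀ {l : List α}, l.Chain' R → (∀ a ∈ l, ∀ b ∈ l, R a b → S a b) → l.Chain' S := by
  intro l
  induction l with
  | nil => exact fun _ _ => List.IsChain.nil
  | cons a t ih =>
    intro hc hi
    unfold List.Chain' at hc ⊢
    rw [List.isChain_cons] at hc ⊢
    refine ⟨fun y hy => hi a (by simp) y
      (List.mem_cons_of_mem _ (List.mem_of_mem_head? hy)) (hc.1 y hy),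
      ih hc.2 (fun x hx y hy h => hi x (List.mem_cons_of_mem _ hx) y
        (List.mem_cons_of_mem _ hy) h)⟩

lemma rep_false_eq_rep_true {k j : ℕ}
    (h : List.replicate k false = List.replicate j true) : k = 0 ∧ j = 0 := by
  cases k with
  | zero =>
    cases j with
    | zero => exact ⟨rfl, rfl⟩
    | succ j => simp [List.replicate_succ] at h
  | succ k =>
    cases j with
    | zero => simp [List.replicate_succ] at h
    | succ j => simp [List.replicate_succ] at h

lemma getLast?_append_cons {α} (l : List α) (c : α) (q : List α) :
    (l ++ c :: q).getLast? = (c :: q).getLast? := by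
  rw [List.getLast?_append]
  obtain ⟨d, hd⟩ : ∃ d, (c :: q).getLast? = some d :=
    ⟨_, List.getLast?_eq_getLast (by simp)⟩
  rw [hd]; rfl

lemma eq_dropLast_concat {α} {z : List α} {c : α} (h : z.getLast? = some c) :
    z.dropLast ++ [c] = z := by
  have hne : z ≠ [] := by rintro rfl; simp at h
  have h2 := List.getLast?_eq_getLast (l := z) hne
  rw [h2, Option.some.injEq] at h
  rw [← h]
  exact List.dropLast_append_getLast hne

/-- Trimming a transition whose endpoints end with the same bit. -/
lemma Tr_dropLast {D : ℕ} {u v : List Bool} (h : Tr (D+1) u v)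
    {c : Bool} (hu : u.getLast? = some c) (hv : v.getLast? = some c) :
    Tr D u.dropLast v.dropLast := by
  obtain ⟨a, b, p, hu', hv', ha, hb⟩ := h
  cases p with
  | nil =>
    rw [hu', getLast?_append_cons] at hu
    rw [hv', getLast?_append_cons] at hv
    simp at hu hv
    rw [hu] at hv
    simp at hv
  | cons c0 q =>
    have hp : (c0 :: q).getLast? = some c := by
      rw [hu', getLast?_append_cons] at hu
      simpa [List.getLast?_cons_cons] using hu
    have hpc : (c0 :: q).dropLast ++ [c] = c0 :: q := eq_dropLast_concat hp
    refine ⟨a, b, (c0 :: q).dropLast, ?_, ?_, ?_, ?_⟩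
    · rw [hu']
      conv_lhs => rw [← hpc]
      rw [show List.replicate a true ++ false :: ((c0::q).dropLast ++ [c])
            = (List.replicate a true ++ false :: (c0::q).dropLast) ++ [c] by simp,
          List.dropLast_concat]
    · rw [hv']
      conv_lhs => rw [← hpc]
      rw [show List.replicate b false ++ true :: ((c0::q).dropLast ++ [c])
            = (List.replicate b false ++ true :: (c0::q).dropLast) ++ [c] by simp,
          List.dropLast_concat]
    · have hql : (c0 :: q).dropLast.length = q.length := by simp
      rw [hql]
      simp only [List.length_cons] at ha
      omega
    · have hql : (c0 :: q).dropLast.length = q.length := by simp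
      rw [hql]
      simp only [List.length_cons] at hb
      omega

/-- Reconstruction: every valid chain is the leaf sequence of a tree. -/
lemma reconstruct (D : ℕ) : ∀ (L : List (List Bool)), L ≠ [] →
    (∀ h ∈ L.head?, ∃ k ≤ D, h = List.replicate k false) →
    (∀ h ∈ L.getLast?, ∃ k ≤ D, h = List.replicate k true) →
    L.Chain' (Tr D) →
    ∃ T : FBT, T.depth ≤ D ∧ T.leaves = L := by
  induction D with
  | zero =>
    intro L hne hh hl hc
    obtain ⟨x, rfl⟩ : ∃ x, L = [x] := by
      cases L with
      | nil => exact absurd rfl hne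
      | cons x t =>
        cases t with
        | nil => exact ⟨x, rfl⟩
        | cons y t' =>
          obtain ⟨a, b, p, _, _, ha, _⟩ := (List.isChain_cons_cons.mp hc).1
          omega
    obtain ⟨k, hk, hxf⟩ := hh x rfl
    obtain ⟨j, hj, hxt⟩ := hl x rfl
    obtain ⟨hk0, hj0⟩ := rep_false_eq_rep_true (hxf.symm.trans hxt)
    refine ⟨leaf, le_refl _, ?_⟩
    rw [hxf, hk0]; rfl
  | succ D ih =>
    intro L hne hh hl hc
    match L, hne with
    | [x], _ =>
      obtain ⟨k, hk, hxf⟩ := hh x rfl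
      obtain ⟨j, hj, hxt⟩ := hl x rfl
      obtain ⟨hk0, hj0⟩ := rep_false_eq_rep_true (hxf.symm.trans hxt)
      refine ⟨leaf, by simp [depth], ?_⟩
      rw [hxf, hk0]; rfl
    | x :: y :: t, _ =>
      set L : List (List Bool) := x :: y :: t with hL
      have hne : L ≠ [] := by simp [hL]
      have hTrxy : Tr (D+1) x y := (List.isChain_cons_cons.mp hc).1
      obtain ⟨k, hk, hx⟩ := hh x rfl
      -- x ends in false
      obtain ⟨a0, b0, p0, hxu, -, -, -⟩ := hTrxy
      have ha0 : a0 = 0 := by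
        cases a0 with
        | zero => rfl
        | succ a0' =>
          rw [hx, List.replicate_succ] at hxu
          cases k with
          | zero => simp at hxu
          | succ k' => rw [List.replicate_succ] at hxu; simp at hxu
      have hk1 : k ≠ 0 := by
        intro h0
        rw [h0] at hx
        rw [hx, ha0] at hxu
        simp at hxu
      have hxlast : x.getLast? = some false := by
        obtain ⟨k', rfl⟩ := Nat.exists_eq_succ_of_ne_zero hk1
        rw [hx, getLast?_replicate_succ]
      -- the split
      set P : List Bool → Bool := fun z => decide (z.getLast? = some false) with hP
      set L₁ := L.takeWhile P with hL₁
      set L₂ := L.dropWhile P with hL₂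
      have hsplit : L₁ ++ L₂ = L := List.takeWhile_append_dropWhile ..
      have hall1 : ∀ z ∈ L₁, z.getLast? = some false := by
        intro z hz
        have := List.mem_takeWhile_imp hz
        simpa [hP] using this
      have h1ne : L₁ ≠ [] := by
        rw [hL₁, hL]
        rw [List.takeWhile_cons_of_pos (by simp [hP, hxlast])]
        simp
      have h2ne : L₂ ≠ [] := by
        intro h2
        have hLL : L₁ = L := by rw [← hsplit, h2, List.append_nil]
        obtain ⟨j, hj, hrep⟩ := hl (L.getLast hne) (List.getLast?_eq_getLast hne)
        have hmem : L.getLast hne ∈ L₁ := by rw [hLL]; exact List.getLast_mem hne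
        have := hall1 _ hmem
        rw [hrep] at this
        cases j with
        | zero => simp at this
        | succ j' => rw [getLast?_replicate_succ] at this; simp at this
      have hc' : (L₁ ++ L₂).Chain' (Tr (D+1)) := by rw [hsplit]; exact hc
      unfold List.Chain' at hc'
      rw [List.isChain_append] at hc'
      obtain ⟨hc1, hc2, hcross⟩ := hc'
      have hcr : Tr (D+1) (L₁.getLast h1ne) (L₂.head h2ne) :=
        hcross _ (List.getLast?_eq_getLast h1ne) _ (List.head?_eq_head h2ne)
      obtain ⟨a, b, p, hu, hv, hda, hdb⟩ := hcr
      have hh2ne : ¬ (P (L₂.head h2ne) = true) := by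
        have := List.head_dropWhile_not P (l := L) h2ne
        rw [Bool.not_eq_true]
        exact this
      have hpnil : p = [] := by
        cases p with
        | nil => rfl
        | cons c0 q =>
          have h1l : (L₁.getLast h1ne).getLast? = some false :=
            hall1 _ (List.getLast_mem _)
          rw [hu, getLast?_append_cons, List.getLast?_cons_cons] at h1l
          have h2l : (L₂.head h2ne).getLast? = (c0 :: q).getLast? := by
            rw [hv, getLast?_append_cons, List.getLast?_cons_cons]
          rw [h1l] at h2l
          exact absurd (by simpa [hP] using h2l) hh2ne
      rw [hpnil] at hu hv hda hdb
      have hall2 : ∀ z ∈ L₂, z.getLast? = some true := by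
        refine chain'_pred ?_ hc2 ?_
        · rintro u' v' ⟨a', b', p', hu', hv', -, -⟩ hqu
          cases p' with
          | nil =>
            rw [hu', getLast?_append_cons] at hqu
            simp at hqu
          | cons c0 q =>
            rw [hu', getLast?_append_cons, List.getLast?_cons_cons] at hqu
            rw [hv', getLast?_append_cons, List.getLast?_cons_cons]
            exact hqu
        · intro h hh'
          rw [List.head?_eq_head h2ne, Option.mem_def, Option.some.injEq] at hh'
          rw [← hh', hv]
          rw [show List.replicate b false ++ true :: [] = List.replicate b false ++ [true] from rfl,
            List.getLast?_concat]
      -- stripped lists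
      have hstrip1 : (L₁.map List.dropLast).Chain' (Tr D) := by
        unfold List.Chain'
        rw [List.isChain_map]
        refine chain'_imp_mem hc1 ?_
        intro u' hu' v' hv' h
        exact Tr_dropLast h (hall1 _ hu') (hall1 _ hv')
      have hstrip2 : (L₂.map List.dropLast).Chain' (Tr D) := by
        unfold List.Chain'
        rw [List.isChain_map]
        refine chain'_imp_mem hc2 ?_
        intro u' hu' v' hv' h
        exact Tr_dropLast h (hall2 _ hu') (hall2 _ hv')
      -- head of stripped L₁
      have hhead1 : ∀ h ∈ (L₁.map List.dropLast).head?, ∃ k' ≤ D, h = List.replicate k' false := by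
        intro h hmem
        rw [List.head?_map] at hmem
        have hh1 : L₁.head? = some x := by
          rw [hL₁, hL, List.takeWhile_cons_of_pos (by simp [hP, hxlast])]
          rfl
        rw [hh1] at hmem
        simp only [Option.map_some, Option.mem_def, Option.some.injEq] at hmem
        obtain ⟨k', rfl⟩ := Nat.exists_eq_succ_of_ne_zero hk1
        refine ⟨k', by omega, ?_⟩
        rw [← hmem, hx, List.replicate_succ', List.dropLast_concat]
      have hlast1 : ∀ h ∈ (L₁.map List.dropLast).getLast?, ∃ k' ≤ D, h = List.replicate k' true := by
        intro h hmem
        rw [List.getLast?_map, List.getLast?_eq_getLast h1ne] at hmem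
        simp only [Option.map_some, Option.mem_def, Option.some.injEq] at hmem
        refine ⟨a, by omega, ?_⟩
        rw [← hmem, hu]
        rw [show List.replicate a true ++ false :: [] = List.replicate a true ++ [false] from rfl,
          List.dropLast_concat]
      have hhead2 : ∀ h ∈ (L₂.map List.dropLast).head?, ∃ k' ≤ D, h = List.replicate k' false := by
        intro h hmem
        rw [List.head?_map, List.head?_eq_head h2ne] at hmem
        simp only [Option.map_some, Option.mem_def, Option.some.injEq] at hmem
        refine ⟨b, by omega, ?_⟩
        rw [← hmem, hv]
        rw [show List.replicate b false ++ true :: [] = List.replicate b false ++ [true] from rfl,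
          List.dropLast_concat]
      have hlast2 : ∀ h ∈ (L₂.map List.dropLast).getLast?, ∃ k' ≤ D, h = List.replicate k' true := by
        intro h hmem
        rw [List.getLast?_map, List.getLast?_eq_getLast h2ne] at hmem
        simp only [Option.map_some, Option.mem_def, Option.some.injEq] at hmem
        have hLlast : L.getLast? = some (L₂.getLast h2ne) := by
          conv_lhs => rw [← hsplit]
          rw [List.getLast?_append, List.getLast?_eq_getLast h2ne]
          rfl
        obtain ⟨j, hj, hrep⟩ := hl _ hLlast
        have hjne : j ≠ 0 := by
          intro h0
          have := hall2 _ (List.getLast_mem h2ne)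
          rw [hrep, h0] at this
          simp at this
        obtain ⟨j', rfl⟩ := Nat.exists_eq_succ_of_ne_zero hjne
        refine ⟨j', by omega, ?_⟩
        rw [← hmem, hrep, List.replicate_succ', List.dropLast_concat]
      obtain ⟨T₁, hd1, hl1⟩ := ih (L₁.map List.dropLast) (by simp [h1ne]) hhead1 hlast1 hstrip1
      obtain ⟨T₂, hd2, hl2⟩ := ih (L₂.map List.dropLast) (by simp [h2ne]) hhead2 hlast2 hstrip2
      refine ⟨node T₁ T₂, by simp [depth]; omega, ?_⟩
      rw [leaves, hl1, hl2, List.map_map, List.map_map]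
      have e1 : L₁.map ((· ++ [false]) ∘ List.dropLast) = L₁ := by
        rw [show ((· ++ [false]) ∘ List.dropLast : List Bool → List Bool)
              = fun z => z.dropLast ++ [false] from rfl]
        rw [List.map_congr_left (fun z hz => eq_dropLast_concat (hall1 z hz))]
        exact List.map_id _
      have e2 : L₂.map ((· ++ [true]) ∘ List.dropLast) = L₂ := by
        rw [show ((· ++ [true]) ∘ List.dropLast : List Bool → List Bool)
              = fun z => z.dropLast ++ [true] from rfl]
        rw [List.map_congr_left (fun z hz => eq_dropLast_concat (hall2 z hz))]
        exact List.map_id _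
      rw [e1, e2, hsplit]

end FBT

namespace FBT

/-- The set of `S`-chains of length `n` starting in `B` and ending at `v`. -/
def Paths (St : Finset (List Bool × List Bool)) (B : Finset (List Bool)) :
    ℕ → List Bool → Finset (List (List Bool))
  | 0, _ => ∅
  | 1, v => if v ∈ B then {[v]} else ∅
  | (n+2), v => (St.filter (fun p => p.2 = v)).biUnion
      (fun p => (Paths St B (n+1) p.1).image (· ++ [v]))

lemma length_of_mem_paths (St : Finset (List Bool × List Bool))
    (B : Finset (List Bool)) :
    ∀ (n : ℕ) (v : List Bool) (L : List (List Bool)), L ∈ Paths St B n v → L.length = n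
  | 0, v, L => by simp [Paths]
  | 1, v, L => by
    rw [Paths]
    split
    · intro h
      rw [Finset.mem_singleton] at h
      simp [h]
    · simp
  | (n+2), v, L => by
    rw [Paths]
    simp only [Finset.mem_biUnion, Finset.mem_image]
    rintro ⟨p, hp, L', hL', rfl⟩
    simp [length_of_mem_paths St B (n+1) p.1 L' hL']

lemma mstar_eq (St : Finset (List Bool × List Bool)) (B : Finset (List Bool))
    (w : ℕ → List Bool → NNReal) (mw : List Bool → NNReal) :
    ∀ (n : ℕ) (v : List Bool),
      Mstar St B w mw n v = (Paths St B n v).sup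
        (fun L => ∏ i ∈ Finset.range n, w (i+1) (L.getD i []) * mw (L.getD i []))
  | 0, v => by simp [Mstar, Paths]
  | 1, v => by
    rw [Mstar, Paths]
    by_cases h : v ∈ B
    · rw [if_pos h, if_pos h, Finset.sup_singleton]
      simp
    · rw [if_neg h, if_neg h]
      simp
  | (n+2), v => by
    rw [Mstar, Paths, Finset.sup_biUnion, NNReal.mul_finset_sup]
    apply Finset.sup_congr rfl
    intro p hp
    rw [mstar_eq St B w mw (n+1) p.1, NNReal.mul_finset_sup, Finset.sup_image]
    apply Finset.sup_congr rfl
    intro L hL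
    have hlen : L.length = n + 1 := length_of_mem_paths St B (n+1) p.1 L hL
    show w (n+2) v * mw v * _ = _
    rw [Function.comp_apply]
    rw [show (∏ i ∈ Finset.range (n+2), w (i+1) ((L ++ [v]).getD i []) * mw ((L ++ [v]).getD i []))
        = (∏ i ∈ Finset.range (n+1), w (i+1) ((L ++ [v]).getD i []) * mw ((L ++ [v]).getD i [])) *
          (w (n+1+1) ((L ++ [v]).getD (n+1) []) * mw ((L ++ [v]).getD (n+1) [])) from
      Finset.prod_range_succ _ _]
    have h1 : ∀ i, i < n + 1 → (L ++ [v]).getD i [] = L.getD i [] := by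
      intro i hi
      rw [List.getD_eq_getElem?_getD, List.getD_eq_getElem?_getD,
        List.getElem?_append_left (by omega)]
    have h2 : (L ++ [v]).getD (n+1) [] = v := by
      rw [List.getD_eq_getElem?_getD, ← hlen, List.getElem?_concat_length]
      rfl
    have h3 : (∏ i ∈ Finset.range (n+1), w (i+1) ((L ++ [v]).getD i []) * mw ((L ++ [v]).getD i []))
        = ∏ i ∈ Finset.range (n+1), w (i+1) (L.getD i []) * mw (L.getD i []) :=
      Finset.prod_congr rfl (fun i hi => by rw [h1 i (Finset.mem_range.mp hi)])
    rw [h2, h3]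
    ring

lemma mem_paths (St : Finset (List Bool × List Bool)) (B : Finset (List Bool)) :
    ∀ (n : ℕ), 1 ≤ n → ∀ (v : List Bool) (L : List (List Bool)),
      (L ∈ Paths St B n v ↔
        L.length = n ∧ (∀ h ∈ L.head?, h ∈ B) ∧
          L.Chain' (fun a b => (a, b) ∈ St) ∧ L.getLast? = some v)
  | 0, h => by omega
  | 1, _ => by
    intro v L
    rw [Paths]
    constructor
    · intro h
      split at h
      · rw [Finset.mem_singleton] at h
        subst h
        refine ⟨rfl, ?_, List.isChain_singleton _, rfl⟩
        intro x hx
        simp at hx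
        subst hx
        assumption
      · simp at h
    · rintro ⟨hlen, hhead, -, hlast⟩
      obtain ⟨x, rfl⟩ := List.length_eq_one_iff.mp hlen
      have hxv : x = v := by simpa using hlast
      rw [if_pos (hxv ▸ hhead x rfl), hxv]
      exact Finset.mem_singleton_self _
  | (n+2), _ => by
    intro v L
    rw [Paths]
    simp only [Finset.mem_biUnion, Finset.mem_image, Finset.mem_filter]
    constructor
    · rintro ⟨p, ⟨hpS, hpv⟩, L', hL', rfl⟩
      obtain ⟨hlen, hhead, hchain, hlast⟩ :=
        (mem_paths St B (n+1) (by omega) p.1 L').mp hL'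
      have hL'ne : L' ≠ [] := by
        intro h; rw [h] at hlen; simp at hlen
      refine ⟨by simp [hlen], ?_, ?_, List.getLast?_concat⟩
      · intro h hh
        rw [List.head?_append, List.head?_eq_head hL'ne] at hh
        exact hhead h (by rw [List.head?_eq_head hL'ne]; exact hh)
      · unfold List.Chain'
        rw [List.isChain_append]
        refine ⟨hchain, List.isChain_singleton _, ?_⟩
        intro x hx y hy
        simp only [List.head?_cons, Option.mem_def, Option.some.injEq] at hy
        rw [hlast] at hx
        simp only [Option.mem_def, Option.some.injEq] at hx
        subst hx; subst hy
        rw [← hpv]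
        exact hpS
    · rintro ⟨hlen, hhead, hchain, hlast⟩
      have hne : L ≠ [] := by intro h; rw [h] at hlen; simp at hlen
      have hL : L.dropLast ++ [L.getLast hne] = L := List.dropLast_append_getLast hne
      have hgl : L.getLast hne = v := by
        rw [List.getLast?_eq_getLast hne] at hlast
        exact Option.some.inj hlast
      have hdlen : L.dropLast.length = n + 1 := by
        rw [List.length_dropLast, hlen]
        omega
      have hdne : L.dropLast ≠ [] := by
        intro h
        rw [h] at hdlen
        simp at hdlen
      have hchain' : (L.dropLast ++ [L.getLast hne]).Chain' (fun a b => (a, b) ∈ St) := by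
        rw [hL]; exact hchain
      unfold List.Chain' at hchain'
      rw [List.isChain_append] at hchain'
      obtain ⟨hc1, -, hcross⟩ := hchain'
      have hSm : (L.dropLast.getLast hdne, v) ∈ St := by
        have := hcross _ (List.getLast?_eq_getLast hdne) (L.getLast hne) rfl
        rwa [hgl] at this
      refine ⟨(L.dropLast.getLast hdne, v), ⟨hSm, rfl⟩, L.dropLast, ?_, by rw [← hgl]; exact hL⟩
      rw [mem_paths St B (n+1) (by omega)]
      refine ⟨hdlen, ?_, hc1, List.getLast?_eq_getLast hdne⟩
      intro h hh
      apply hhead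
      have heq : L.head? = L.dropLast.head? := by
        conv_lhs => rw [← hL]
        rw [List.head?_append, List.head?_eq_head hdne]
        rfl
      rw [heq]
      exact hh

end FBT

theorem stmt15' (D N : ℕ) (hN : 1 ≤ N) (w : ℕ → List Bool → NNReal)
    (mw : List Bool → NNReal) :
    (FBT.Br D).sup (fun v => FBT.Mstar (FBT.S D) (FBT.Bl D) w mw N v) =
      ((FBT.trees D).filter (fun T => T.leaves.length = N)).sup
        (fun T => ∏ n ∈ Finset.range N,
          w (n + 1) (T.leaves.getD n []) * mw (T.leaves.getD n [])) := by
  classical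
  apply le_antisymm
  · apply Finset.sup_le
    intro v hv
    rw [FBT.mstar_eq (FBT.S D) (FBT.Bl D) w mw N v]
    apply Finset.sup_le
    intro L hL
    rw [FBT.mem_paths (FBT.S D) (FBT.Bl D) N hN v L] at hL
    obtain ⟨hlen, hhead, hchain, hlast⟩ := hL
    have hne : L ≠ [] := by intro h; rw [h] at hlen; simp at hlen; omega
    have hTr : L.Chain' (FBT.Tr D) := by
      refine hchain.imp ?_
      rintro a b hab
      rw [FBT.S, Finset.mem_biUnion] at hab
      obtain ⟨T, hT, htr⟩ := hab
      obtain ⟨a', b', p, h1, h2, h3, h4⟩ := FBT.transitions_shape htr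
      have hTd : T.depth ≤ D := FBT.mem_trees.mp hT
      exact ⟨a', b', p, h1, h2, by omega, by omega⟩
    have hheadR : ∀ h ∈ L.head?, ∃ k ≤ D, h = List.replicate k false := by
      intro h hh
      have := hhead h hh
      rw [FBT.Bl, Finset.mem_image] at this
      obtain ⟨k, hk, hrep⟩ := this
      exact ⟨k, by simpa using Nat.lt_succ_iff.mp (Finset.mem_range.mp hk), hrep.symm⟩
    have hlastR : ∀ h ∈ L.getLast?, ∃ k ≤ D, h = List.replicate k true := by
      intro h hh
      rw [hlast, Option.mem_def, Option.some.injEq] at hh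
      subst hh
      rw [FBT.Br, Finset.mem_image] at hv
      obtain ⟨k, hk, hrep⟩ := hv
      exact ⟨k, Nat.lt_succ_iff.mp (Finset.mem_range.mp hk), hrep.symm⟩
    obtain ⟨T, hTd, hTl⟩ := FBT.reconstruct D L hne hheadR hlastR hTr
    have hmem : T ∈ (FBT.trees D).filter (fun T => T.leaves.length = N) := by
      rw [Finset.mem_filter]
      exact ⟨FBT.mem_trees.mpr hTd, by rw [hTl]; exact hlen⟩
    calc (∏ i ∈ Finset.range N, w (i+1) (L.getD i []) * mw (L.getD i []))
        = ∏ n ∈ Finset.range N,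
            w (n + 1) (T.leaves.getD n []) * mw (T.leaves.getD n []) := by rw [hTl]
      _ ≤ _ := Finset.le_sup (f := fun T => ∏ n ∈ Finset.range N,
            w (n + 1) (T.leaves.getD n []) * mw (T.leaves.getD n [])) hmem
  · apply Finset.sup_le
    intro T hT
    rw [Finset.mem_filter] at hT
    obtain ⟨hTD, hTN⟩ := hT
    have hTd : T.depth ≤ D := FBT.mem_trees.mp hTD
    obtain ⟨j, hj, hlast⟩ := FBT.getLast?_leaves T
    have hvBr : List.replicate j true ∈ FBT.Br D := by
      rw [FBT.Br, Finset.mem_image]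
      exact ⟨j, Finset.mem_range.mpr (by omega), rfl⟩
    refine le_trans ?_ (Finset.le_sup hvBr)
    rw [FBT.mstar_eq (FBT.S D) (FBT.Bl D) w mw N _]
    have hmemP : T.leaves ∈ FBT.Paths (FBT.S D) (FBT.Bl D) N (List.replicate j true) := by
      rw [FBT.mem_paths (FBT.S D) (FBT.Bl D) N hN]
      refine ⟨hTN, ?_, ?_, hlast⟩
      · intro h hh
        obtain ⟨k, hk, hrep⟩ := FBT.head?_leaves T
        rw [hrep, Option.mem_def, Option.some.injEq] at hh
        subst hh
        rw [FBT.Bl, Finset.mem_image]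
        exact ⟨k, Finset.mem_range.mpr (by omega), rfl⟩
      · refine (FBT.chain'_transitions T).imp ?_
        intro a b hab
        rw [FBT.S, Finset.mem_biUnion]
        exact ⟨T, hTD, hab⟩
    exact Finset.le_sup
      (f := fun L => ∏ i ∈ Finset.range N, w (i + 1) (L.getD i []) * mw (L.getD i [])) hmemP

/-- correctness of the Viterbi-style max-product dynamic
program: the max of the DP table over the right boundary equals the maximum,
over internal trees with `N` leaves, of the product of weights at their
leaves. -/
theorem stmt15 (D N : ℕ) (hN : 1 ≤ N) (w : ℕ → List Bool → NNReal)
    (mw : List Bool → NNReal) :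
    (FBT.Br D).sup (fun v => FBT.Mstar (FBT.S D) (FBT.Bl D) w mw N v) =
      ((FBT.trees D).filter (fun T => T.leaves.length = N)).sup
        (fun T => ∏ n ∈ Finset.range N,
          w (n + 1) (T.leaves.getD n []) * mw (T.leaves.getD n [])) :=
  stmt15' D N hN w mw
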